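/- If u is strictly submodular and ȳ > 0, then no single point x̄ > 0 can simultaneously be an interior maximizer of x ↦ u(x, ȳ) - kx and of x ↦ u(x, 0) - kx. -/

import Mathlib

/-- If u is strictly submodular (u₁ strictly decreasing in y) and ȳ > 0, then no x̄ > 0 can
simultaneously be a maximizer of x ↦ u(x,ȳ) - kx and of x ↦ u(x,0) - kx on ℝ≥0. -/
theorem stmt_4 (u u1 : ℝ → ℝ → ℝ) (k : ℝ) (hk : 0 < k)
    (hderiv : ∀ y x, HasDerivAt (fun t => u t y) (u1 x y) x)
    (h12 : ∀ x, StrictAnti (fun y => u1 x y))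
    (xbar ybar : ℝ) (hxbar : 0 < xbar) (hybar : 0 < ybar) :
    ¬ (IsMaxOn (fun x => u x ybar - k * x) (Set.Ici 0) xbar ∧
       IsMaxOn (fun x => u x 0 - k * x) (Set.Ici 0) xbar) := by
  rintro ⟨h1, h2⟩
  have hmem : Set.Ici (0:ℝ) ∈ nhds xbar :=
    Ici_mem_nhds hxbar
  have key : ∀ y, IsMaxOn (fun x => u x y - k * x) (Set.Ici 0) xbar → u1 xbar y = k := by
    intro y hmax
    have hd : HasDerivAt (fun x => u x y - k * x) (u1 xbar y - k) xbar :=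
      by exact ((hderiv y xbar).sub ((hasDerivAt_id' xbar).const_mul k)).congr_deriv (by ring)
    have hloc : IsLocalMax (fun x => u x y - k * x) xbar := hmax.isLocalMax hmem
    have := hloc.hasDerivAt_eq_zero hd
    linarith
  have e1 := key ybar h1
  have e2 := key 0 h2
  have := h12 xbar hybar
  simp only at this
  rw [e1, e2] at this
  exact lt_irrefl _ this
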